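/- Let A be a finite-dimensional left Leibniz algebra, U a right-subnormal subalgebra of A, V an ideal of U contained in the Frattini subalgebra Φ(A), and suppose U/V is nilpotent. Then U is nilpotent. -/

import Mathlib

/-- Lower central series of the subalgebra `U`: `U¹ = U`, `U^{k+1} = U·Uᵏ`. -/
def lcsIn {F A : Type*} [Field F] [AddCommGroup A] [Module F A]
    (mul : A →ₗ[F] A →ₗ[F] A) (U : Submodule F A) : ℕ → Submodule F A
  | 0 => U
  | k + 1 => Submodule.span F {x : A | ∃ a ∈ U, ∃ b ∈ lcsIn mul U k, x = mul a b}

/-- `U` is a maximal subalgebra. -/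
def IsMaxSubalg {F A : Type*} [Field F] [AddCommGroup A] [Module F A]
    (mul : A →ₗ[F] A →ₗ[F] A) (U : Submodule F A) : Prop :=
  (∀ u ∈ U, ∀ v ∈ U, mul u v ∈ U) ∧ U ≠ ⊤ ∧
    ∀ V : Submodule F A, (∀ u ∈ V, ∀ v ∈ V, mul u v ∈ V) → U < V → V = ⊤


section Aux

variable {F A : Type*} [Field F] [AddCommGroup A] [Module F A]

/-- Iterated-derivation vanishing: if `f` is a derivation and `f^p a = 0`, `f^q b = 0`,
then `f^(p+q) (a·b) = 0`. -/
lemma der_pow_zero (mul : A →ₗ[F] A →ₗ[F] A) (f : Module.End F A)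
    (hder : ∀ a b, f (mul a b) = mul (f a) b + mul a (f b)) :
    ∀ N p q a b, p + q ≤ N → (f ^ p) a = 0 → (f ^ q) b = 0 →
      (f ^ (p + q)) (mul a b) = 0 := by
  intro N
  induction N with
  | zero =>
    intro p q a b hpq ha hb
    have hp : p = 0 := by omega
    have hq : q = 0 := by omega
    subst hp; subst hq
    simp only [pow_zero, Module.End.one_apply] at ha hb ⊢
    rw [ha]
    simp
  | succ N ih =>
    intro p q a b hpq ha hb
    match p, q with
    | 0, q =>
      simp only [pow_zero, Module.End.one_apply] at ha
      rw [ha]; simp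
    | p + 1, 0 =>
      simp only [pow_zero, Module.End.one_apply] at hb
      rw [hb]; simp
    | p + 1, q + 1 =>
      have hstep : (f ^ (p + 1 + (q + 1))) (mul a b)
          = (f ^ (p + q + 1)) (f (mul a b)) := by
        have : p + 1 + (q + 1) = (p + q + 1) + 1 := by omega
        rw [this, pow_succ, Module.End.mul_apply]
      rw [hstep, hder a b, map_add]
      have h1 : (f ^ (p + (q + 1))) (mul (f a) b) = 0 := by
        apply ih p (q + 1) (f a) b (by omega) _ hb
        rw [← Module.End.mul_apply, ← pow_succ]
        exact ha
      have h2 : (f ^ (p + 1 + q)) (mul a (f b)) = 0 := by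
        apply ih (p + 1) q a (f b) (by omega) ha
        rw [← Module.End.mul_apply, ← pow_succ]
        exact hb
      have e1 : p + (q + 1) = p + q + 1 := by omega
      have e2 : p + 1 + q = p + q + 1 := by omega
      rw [e1] at h1; rw [e2] at h2
      rw [h1, h2, add_zero]

/-- Every proper subalgebra is contained in a maximal subalgebra. -/
lemma exists_max_subalg [FiniteDimensional F A] (mul : A →ₗ[F] A →ₗ[F] A) :
    ∀ d (E : Submodule F A), Module.finrank F A - Module.finrank F E ≤ d →
      (∀ u ∈ E, ∀ v ∈ E, mul u v ∈ E) → E ≠ ⊤ →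
      ∃ M, IsMaxSubalg mul M ∧ E ≤ M := by
  intro d
  induction d with
  | zero =>
    intro E hd hE hne
    exfalso
    apply hne
    apply Submodule.eq_top_of_finrank_eq
    have := Submodule.finrank_le E
    omega
  | succ d ih =>
    intro E hd hE hne
    by_cases hmax : ∀ W : Submodule F A, (∀ u ∈ W, ∀ v ∈ W, mul u v ∈ W) → E < W → W = ⊤
    · exact ⟨E, ⟨hE, hne, hmax⟩, le_refl E⟩
    · push_neg at hmax
      obtain ⟨W, hWalg, hEW, hWne⟩ := hmax
      have hlt : Module.finrank F E < Module.finrank F W :=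
        Submodule.finrank_lt_finrank_of_lt hEW
      have hWle : Module.finrank F W ≤ Module.finrank F A := Submodule.finrank_le W
      obtain ⟨M, hM, hWM⟩ := ih W (by omega) hWalg hWne
      exact ⟨M, hM, hEW.le.trans hWM⟩

end Aux

attribute [local instance] LieRing.ofAssociativeRing LieAlgebra.ofAssociativeAlgebra

/-- a right-subnormal subalgebra `U` with an ideal `V ⊆ Φ(A)` such that
`U/V` is nilpotent is itself nilpotent. -/
theorem nilpotent_of_subnormal_frattini {F A : Type*} [Field F] [AddCommGroup A]
    [Module F A] [FiniteDimensional F A]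
    (mul : A →ₗ[F] A →ₗ[F] A)
    (leibniz : ∀ a b c : A, mul a (mul b c) = mul (mul a b) c + mul b (mul a c))
    (U : Submodule F A) (hU : ∀ u ∈ U, ∀ v ∈ U, mul u v ∈ U)
    -- `U` is right subnormal in `A`:
    (hsub : ∃ (k : ℕ) (c : ℕ → Submodule F A), c 0 = ⊤ ∧ c k = U ∧
      (∀ i, ∀ u ∈ c i, ∀ v ∈ c i, mul u v ∈ c i) ∧
      ∀ i < k, c (i + 1) ≤ c i ∧ ∀ x ∈ c (i + 1), ∀ y ∈ c i, mul x y ∈ c (i + 1))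
    (V : Submodule F A) (hVU : V ≤ U)
    -- `V` is an ideal of `U`:
    (hVid : ∀ u ∈ U, ∀ v ∈ V, mul u v ∈ V ∧ mul v u ∈ V)
    -- `V` is contained in the Frattini subalgebra of `A`:
    (hVfrat : ∀ M : Submodule F A, IsMaxSubalg mul M → V ≤ M)
    -- `U/V` is nilpotent:
    (hUV : ∃ r, lcsIn mul U r ≤ V) :
    ∃ k, lcsIn mul U k = ⊥ := by
  classical
  obtain ⟨k, c, hc0, hck, hcw, hchain⟩ := hsub
  obtain ⟨r, hr⟩ := hUV
  set n := Module.finrank F A with hn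
  set m := n + k + r with hmdef
  -- U is contained in every term of the chain
  have hUc : ∀ j i, i + j = k → U ≤ c i := by
    intro j
    induction j with
    | zero => intro i h; rw [show i = k by omega, hck]
    | succ j ih =>
      intro i h
      exact (ih (i + 1) (by omega)).trans (hchain i (by omega)).1
  -- each left multiplication by an element of U is nilpotent on A
  have key : ∀ u ∈ U, (mul u) ^ m = 0 := by
    intro u hu
    set f : Module.End F A := mul u with hf
    have hder : ∀ a b, f (mul a b) = mul (f a) b + mul a (f b) := fun a b => leibniz u a b
    have h1 : ∀ i, i ≤ k → ∀ x, (f ^ i) x ∈ c i := by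
      intro i
      induction i with
      | zero => intro _ x; rw [hc0]; trivial
      | succ i ih =>
        intro hik x
        rw [pow_succ', Module.End.mul_apply]
        exact (hchain i (by omega)).2 u (hUc (k - (i + 1)) (i + 1) (by omega) hu)
          ((f ^ i) x) (ih (by omega) x)
    have h2 : ∀ j x, (f ^ (k + j)) x ∈ lcsIn mul U j := by
      intro j
      induction j with
      | zero =>
        intro x
        have := h1 k le_rfl x
        rw [hck] at this
        exact this
      | succ j ih =>
        intro x
        have e : k + (j + 1) = (k + j) + 1 := by omega
        rw [e, pow_succ', Module.End.mul_apply]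
        exact Submodule.subset_span ⟨u, hu, (f ^ (k + j)) x, ih x, rfl⟩
    have hrangeV : ∀ x, (f ^ m) x ∈ V := by
      intro x
      have e : m = (k + r) + n := by omega
      rw [e, pow_add, Module.End.mul_apply]
      exact hr (h2 r ((f ^ n) x))
    have hker2 : LinearMap.ker (f ^ (m + m)) = LinearMap.ker (f ^ m) := by
      rw [Module.End.ker_pow_eq_ker_pow_finrank_of_le (show Module.finrank F A ≤ m + m by omega),
        Module.End.ker_pow_eq_ker_pow_finrank_of_le (show Module.finrank F A ≤ m by omega)]
    have hEsub : ∀ a ∈ LinearMap.ker (f ^ m), ∀ b ∈ LinearMap.ker (f ^ m),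
        mul a b ∈ LinearMap.ker (f ^ m) := by
      intro a ha b hb
      rw [← hker2, LinearMap.mem_ker]
      exact der_pow_zero mul f hder (m + m) m m a b le_rfl
        (LinearMap.mem_ker.mp ha) (LinearMap.mem_ker.mp hb)
    have hdisj : LinearMap.range (f ^ m) ⊓ LinearMap.ker (f ^ m) = ⊥ := by
      rw [eq_bot_iff]
      rintro x hx
      obtain ⟨hx1, hx2⟩ := Submodule.mem_inf.mp hx
      obtain ⟨y, rfl⟩ := hx1
      have hy : y ∈ LinearMap.ker (f ^ (m + m)) := by
        rw [LinearMap.mem_ker, pow_add, Module.End.mul_apply]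
        exact hx2
      rw [hker2, LinearMap.mem_ker] at hy
      simp [hy]
    have hcod : LinearMap.range (f ^ m) ⊔ LinearMap.ker (f ^ m) = ⊤ := by
      apply Submodule.eq_top_of_finrank_eq
      have hrk := Submodule.finrank_sup_add_finrank_inf_eq
        (LinearMap.range (f ^ m)) (LinearMap.ker (f ^ m))
      have hrn := LinearMap.finrank_range_add_finrank_ker (f ^ m)
      rw [hdisj] at hrk
      simp only [finrank_bot, add_zero] at hrk
      have hsuple := Submodule.finrank_le (LinearMap.range (f ^ m) ⊔ LinearMap.ker (f ^ m))
      omega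
    have hEtop : LinearMap.ker (f ^ m) = ⊤ := by
      by_contra hne
      obtain ⟨M, hM, hEM⟩ := exists_max_subalg mul n (LinearMap.ker (f ^ m))
        (by omega) hEsub hne
      have hVM := hVfrat M hM
      have hrange : LinearMap.range (f ^ m) ≤ M := by
        rintro x ⟨y, rfl⟩
        exact hVM (hrangeV y)
      have htop : (⊤ : Submodule F A) ≤ M := by
        rw [← hcod]; exact sup_le hrange hEM
      exact hM.2.1 (top_le_iff.mp htop)
    exact LinearMap.ker_eq_top.mp hEtop
  -- the Lie algebra of left multiplications restricted to U
  have hres : ∀ u : ↥U, ∀ x ∈ U, mul u.1 x ∈ U := fun u x hx => hU u.1 u.2 x hx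
  let T : ↥U →ₗ[F] Module.End F ↥U :=
    { toFun := fun u => LinearMap.restrict (mul u.1) (hres u)
      map_add' := by
        intro u v
        ext x
        simp [LinearMap.restrict_coe_apply, map_add]
      map_smul' := by
        intro t u
        ext x
        simp [LinearMap.restrict_coe_apply, map_smul] }
  have hTapp : ∀ (u x : ↥U), ((T u x : A)) = mul u.1 x.1 :=
    fun u x => rfl
  have hTlie : ∀ u v : ↥U, ⁅T u, T v⁆ = T ⟨mul u.1 v.1, hU _ u.2 _ v.2⟩ := by
    intro u v
    ext x
    rw [Ring.lie_def]
    simp only [LinearMap.sub_apply, Module.End.mul_apply, AddSubgroupClass.coe_sub, hTapp]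
    rw [leibniz u.1 v.1 x.1]
    abel
  let g : LieSubalgebra F (Module.End F ↥U) :=
    { LinearMap.range T with
      lie_mem' := by
        intro x y hx hy
        obtain ⟨u, rfl⟩ := hx
        obtain ⟨v, rfl⟩ := hy
        rw [hTlie]
        exact ⟨_, rfl⟩ }
  have hEng := LieAlgebra.isEngelian_of_isNoetherian (R := F) (L := g)
  have hmod : LieModule.IsNilpotent g ↥U := by
    apply hEng
    rintro ⟨x, hx⟩
    obtain ⟨u, rfl⟩ := hx
    have hEnd : LieModule.toEnd F g ↥U ⟨T u, ⟨u, rfl⟩⟩ = T u := by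
      ext z; rfl
    rw [hEnd]
    refine ⟨m, ?_⟩
    have hk0 := key u.1 u.2
    have hTu : T u = (mul u.1).restrict (hres u) := rfl
    rw [hTu, Module.End.pow_restrict]
    ext z
    rw [LinearMap.restrict_coe_apply, hk0]
    simp
  obtain ⟨s, hs⟩ := (LieModule.isNilpotent_iff F g ↥U).mp hmod
  refine ⟨s, ?_⟩
  have hle : ∀ j, lcsIn mul U j ≤
      Submodule.map U.subtype (LieModule.lowerCentralSeries F g ↥U j).toSubmodule := by
    intro j
    induction j with
    | zero =>
      rw [LieModule.lowerCentralSeries_zero, LieSubmodule.top_toSubmodule,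
        Submodule.map_subtype_top]
      exact le_rfl
    | succ j ih =>
      show Submodule.span F _ ≤ _
      rw [Submodule.span_le]
      rintro x ⟨a, ha, b, hb, rfl⟩
      obtain ⟨b', hb', rfl⟩ := Submodule.mem_map.mp (ih hb)
      have hxg : T ⟨a, ha⟩ ∈ g := ⟨⟨a, ha⟩, rfl⟩
      set xg : ↥g := ⟨T ⟨a, ha⟩, hxg⟩ with hxgdef
      have hbr : ⁅xg, b'⁆ ∈ LieModule.lowerCentralSeries F g ↥U (j + 1) := by
        rw [LieModule.lowerCentralSeries_succ]
        exact LieSubmodule.lie_mem_lie (LieSubmodule.mem_top xg)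
          ((LieSubmodule.mem_toSubmodule _).mp hb')
      refine Submodule.mem_map.mpr ⟨⁅xg, b'⁆, (LieSubmodule.mem_toSubmodule _).mpr hbr, ?_⟩
      show ((⁅xg, b'⁆ : ↥U) : A) = mul a (b' : A)
      have : ⁅xg, b'⁆ = T ⟨a, ha⟩ b' := rfl
      rw [this, hTapp]
  have hfin := hle s
  rw [hs] at hfin
  simpa using hfin
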